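/- The operator P₂ : Dom(P₂) ⊂ C₂(Ḡ) → C₂(Ḡ), defined by P₂u = Δu on Dom(P₂) = {u ∈ C₂(Ḡ) : Δu ∈ C₂(Ḡ)} (with Δu understood in the sense of distributions), admits a closure P̄₂ : Dom(P̄₂) ⊂ C₂(Ḡ) → C₂(Ḡ) as an unbounded operator in the Banach space C₂(Ḡ). -/

import Mathlib

open MeasureTheory Metric Set Filter Topology BoundedContinuousFunction

noncomputable section

/-- The plane `ℝ²`. -/
abbrev E2 := EuclideanSpace ℝ (Fin 2)

/-- The Laplacian of a function `φ : ℝ² → ℝ`. -/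
def lap (φ : E2 → ℝ) (x : E2) : ℝ :=
  ∑ i : Fin 2,
    fderiv ℝ (fun y => fderiv ℝ φ y (EuclideanSpace.single i 1)) x (EuclideanSpace.single i 1)

/-- `f` is the Laplacian of `u` on the open set `G` in the sense of distributions. -/
def IsDistLaplacianOn (G : Set E2) (u f : E2 → ℝ) : Prop :=
  ∀ φ : E2 → ℝ, ContDiff ℝ (⊤ : ℕ∞) φ → HasCompactSupport φ → tsupport φ ⊆ G →
    ∫ x in G, u x * lap φ x = ∫ x in G, f x * φ x

/-- Extension by zero (to the whole plane) of a function defined on `closure G`. -/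
def extendByZero (G : Set E2) (u : ↥(closure G) →ᵇ ℝ) : E2 → ℝ :=
  Function.extend Subtype.val (⇑u) 0

/-- `Γ` is a smooth (`C^∞`) regular simple curve. -/
def IsSmoothCurve (Γ : Set E2) : Prop :=
  ∃ γ : ℝ → E2, ContDiff ℝ (⊤ : ℕ∞) γ ∧ InjOn γ (Ioo 0 1) ∧
    (∀ t ∈ Ioo (0 : ℝ) 1, deriv γ t ≠ 0) ∧ γ '' Ioo 0 1 = Γ

/-- Near the point `g`, the region `G` coincides with a plane angle of opening `π`
(i.e. with a half-plane whose boundary line passes through `g`). -/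
def HasFlatAngleAt (G : Set E2) (g : E2) (ε : ℝ) : Prop :=
  ∃ ν : E2, ν ≠ 0 ∧ G ∩ ball g ε = {x | 0 < (inner ℝ ν (x - g) : ℝ)} ∩ ball g ε

/-- `Ω` is a smooth nondegenerate transformation (injective with everywhere
invertible differential) defined on a neighborhood of the curve `closure Γ`. -/
def IsSmoothNondegOn (Ω : E2 → E2) (Γ : Set E2) : Prop :=
  ∃ U : Set E2, IsOpen U ∧ closure Γ ⊆ U ∧ ContDiffOn ℝ (⊤ : ℕ∞) Ω U ∧
    InjOn Ω U ∧ ∀ y ∈ U, LinearMap.det ((fderiv ℝ Ω y) : E2 →ₗ[ℝ] E2) ≠ 0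

/-- `b ∈ C^∞(closure Γ)`: `b` is smooth on a neighborhood of `closure Γ`. -/
def IsSmoothOnCl (b : E2 → ℝ) (Γ : Set E2) : Prop :=
  ∃ U : Set E2, IsOpen U ∧ closure Γ ⊆ U ∧ ContDiffOn ℝ (⊤ : ℕ∞) b U

/-- The geometric data of Example 2: a bounded plane region `G` with smooth boundary
`∂G = Γ₁ ∪ Γ₂ ∪ {g₁, g₂}`, coinciding with a plane angle of opening `π` near `g₁, g₂`,
coefficients `b₁, b₂` and smooth nondegenerate transformations `Ω₁, Ω₂` mapping `Γ₁, Γ₂`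
into `G`, with `Ω₁(g₁) ≠ Ω₂(g₁)`, each equal near `g₁` to a rotation about `g₁`
composed with a shift. -/
structure Setting2 where
  /-- the region -/
  G : Set E2
  /-- the boundary arcs -/
  Γ₁ : Set E2
  Γ₂ : Set E2
  /-- the conjugation points, `𝒦 = {g₁, g₂}` -/
  g₁ : E2
  g₂ : E2
  ε : ℝ
  hG_open : IsOpen G
  hG_conn : IsConnected G
  hG_bdd : Bornology.IsBounded G
  hg_ne : g₁ ≠ g₂
  /-- `∂G = Γ₁ ∪ Γ₂ ∪ 𝒦` -/
  hbdry : frontier G = Γ₁ ∪ Γ₂ ∪ {g₁, g₂}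
  /-- `Γ₁ ∩ Γ₂ = ∅` -/
  hΓ_disj : Γ₁ ∩ Γ₂ = ∅
  hK_disj : ({g₁, g₂} : Set E2) ∩ (Γ₁ ∪ Γ₂) = ∅
  /-- `closure Γ₁ ∩ closure Γ₂ = 𝒦` -/
  hΓcl : closure Γ₁ ∩ closure Γ₂ = {g₁, g₂}
  /-- `Γ₁`, `Γ₂` are open in the topology of `∂G` -/
  hΓ₁_open : ∃ V : Set E2, IsOpen V ∧ Γ₁ = V ∩ frontier G
  hΓ₂_open : ∃ V : Set E2, IsOpen V ∧ Γ₂ = V ∩ frontier G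
  hΓ₁_conn : IsConnected Γ₁
  hΓ₂_conn : IsConnected Γ₂
  hΓ₁_curve : IsSmoothCurve Γ₁
  hΓ₂_curve : IsSmoothCurve Γ₂
  hε : 0 < ε
  /-- `G` coincides with a plane angle of opening `π` near `g₁` and `g₂` -/
  hangle₁ : HasFlatAngleAt G g₁ ε
  hangle₂ : HasFlatAngleAt G g₂ ε
  /-- the coefficients in the nonlocal conditions -/
  b₁ : E2 → ℝ
  b₂ : E2 → ℝ
  /-- the transformations in the nonlocal conditions -/
  Ω₁ : E2 → E2
  Ω₂ : E2 → E2
  hb₁_smooth : IsSmoothOnCl b₁ Γ₁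
  hb₂_smooth : IsSmoothOnCl b₂ Γ₂
  hb₁_range : ∀ y ∈ closure Γ₁, 0 ≤ b₁ y ∧ b₁ y ≤ 1
  hb₂_range : ∀ y ∈ closure Γ₂, 0 ≤ b₂ y ∧ b₂ y ≤ 1
  /-- `b₁ = b₂ = b* > 0` on `𝒪_{ε/2}(g₁)` -/
  hb_const : ∃ bstar : ℝ, 0 < bstar ∧
    (∀ y ∈ closure Γ₁ ∩ ball g₁ (ε / 2), b₁ y = bstar) ∧
    (∀ y ∈ closure Γ₂ ∩ ball g₁ (ε / 2), b₂ y = bstar)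
  /-- `b₁, b₂ = 0` outside `𝒪_ε(g₁)` -/
  hb₁_zero : ∀ y ∈ closure Γ₁, y ∉ ball g₁ ε → b₁ y = 0
  hb₂_zero : ∀ y ∈ closure Γ₂, y ∉ ball g₁ ε → b₂ y = 0
  hΩ₁_nondeg : IsSmoothNondegOn Ω₁ Γ₁
  hΩ₂_nondeg : IsSmoothNondegOn Ω₂ Γ₂
  /-- `Ω_j(Γ_j) ⊆ G` -/
  hΩ₁_maps : Ω₁ '' Γ₁ ⊆ G
  hΩ₂_maps : Ω₂ '' Γ₂ ⊆ G
  /-- `Ω_j(g₁) ∈ G` -/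
  hΩ₁_g₁ : Ω₁ g₁ ∈ G
  hΩ₂_g₁ : Ω₂ g₁ ∈ G
  /-- `Ω₁(g₁) ≠ Ω₂(g₁)` -/
  hΩ_ne : Ω₁ g₁ ≠ Ω₂ g₁
  /-- on `𝒪_ε(g₁)`, each `Ω_j` is the composition of a rotation about `g₁` and a shift -/
  hΩ₁_rot : ∃ (R : E2 ≃ₗᵢ[ℝ] E2) (v : E2), R.toLinearEquiv.det = 1 ∧
    ∀ y ∈ ball g₁ ε, Ω₁ y = g₁ + v + R (y - g₁)
  hΩ₂_rot : ∃ (R : E2 ≃ₗᵢ[ℝ] E2) (v : E2), R.toLinearEquiv.det = 1 ∧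
    ∀ y ∈ ball g₁ ε, Ω₂ y = g₁ + v + R (y - g₁)
  -- inclusions (consequences of the above) needed to state the nonlocal conditions
  hΓ₁cl_sub : closure Γ₁ ⊆ closure G
  hΓ₂_sub : Γ₂ ⊆ closure G
  hΩ₁_sub : ∀ y ∈ closure Γ₁, Ω₁ y ∈ closure G
  hΩ₂_sub : ∀ y ∈ Γ₂, Ω₂ y ∈ closure G

/-- The space `C₂(Ḡ)`: continuous functions `u` on `closure G` satisfying the nonlocal
conditions `u(y) - b₁(y) u(Ω₁(y)) = 0` for `y ∈ closure Γ₁` and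
`u(y) - b₂(y) u(Ω₂(y)) = 0` for `y ∈ Γ₂`. -/
def Setting2.C2 (S : Setting2) : Set (↥(closure S.G) →ᵇ ℝ) :=
  {u | (∀ y, ∀ hy : y ∈ closure S.Γ₁,
          u ⟨y, S.hΓ₁cl_sub hy⟩ - S.b₁ y * u ⟨S.Ω₁ y, S.hΩ₁_sub y hy⟩ = 0) ∧
       (∀ y, ∀ hy : y ∈ S.Γ₂,
          u ⟨y, S.hΓ₂_sub hy⟩ - S.b₂ y * u ⟨S.Ω₂ y, S.hΩ₂_sub y hy⟩ = 0)}

/-- The graph of the operator `P₂ : Dom(P₂) ⊆ C₂(Ḡ) → C₂(Ḡ)`, `P₂ u = Δu` on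
`Dom(P₂) = {u ∈ C₂(Ḡ) : Δu ∈ C₂(Ḡ)}`, the Laplacian taken in the sense of distributions. -/
def Setting2.graphP (S : Setting2) :
    Set ((↥(closure S.G) →ᵇ ℝ) × (↥(closure S.G) →ᵇ ℝ)) :=
  {p | p.1 ∈ S.C2 ∧ p.2 ∈ S.C2 ∧
    IsDistLaplacianOn S.G (extendByZero S.G p.1) (extendByZero S.G p.2)}

lemma ext_apply (G : Set E2) (u : ↥(closure G) →ᵇ ℝ) {x : E2} (hx : x ∈ closure G) :
    extendByZero G u x = u ⟨x, hx⟩ := by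
  exact Subtype.val_injective.extend_apply (⇑u) 0 ⟨x, hx⟩

lemma ext_zero (G : Set E2) (u : ↥(closure G) →ᵇ ℝ) {x : E2} (hx : x ∉ closure G) :
    extendByZero G u x = 0 := by
  rw [extendByZero, Function.extend_apply']
  · rfl
  · rintro ⟨a, rfl⟩; exact hx a.2

lemma ext_norm_le (G : Set E2) (u : ↥(closure G) →ᵇ ℝ) (x : E2) :
    ‖extendByZero G u x‖ ≤ ‖u‖ := by
  by_cases hx : x ∈ closure G
  · rw [ext_apply G u hx]; exact u.norm_coe_le_norm _
  · rw [ext_zero G u hx]; simp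

lemma ext_contOn (G : Set E2) (u : ↥(closure G) →ᵇ ℝ) :
    ContinuousOn (extendByZero G u) (closure G) := by
  rw [continuousOn_iff_continuous_restrict]
  have : (closure G).domRestrict (extendByZero G u) = ⇑u := by
    funext a; exact ext_apply G u a.2
  rw [this]; exact u.continuous

lemma ext_integrableOn (G : Set E2) (hG : IsOpen G) (hGb : Bornology.IsBounded G)
    (u : ↥(closure G) →ᵇ ℝ) (ψ : E2 → ℝ) (hψ : Continuous ψ) :
    IntegrableOn (fun x => extendByZero G u x * ψ x) G := by
  have hGm : MeasurableSet G := hG.measurableSet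
  obtain ⟨C, hC⟩ : ∃ C, ∀ x ∈ closure G, ‖ψ x‖ ≤ C :=
    hGb.isCompact_closure.exists_bound_of_continuousOn hψ.continuousOn
  refine Integrable.mono' (g := fun _ => ‖u‖ * C) ?_ ?_ ?_
  · exact integrableOn_const hGb.measure_lt_top.ne
  · exact (((ext_contOn G u).mono subset_closure).mul hψ.continuousOn).aestronglyMeasurable hGm
  · refine (ae_restrict_iff' hGm).2 (ae_of_all _ fun x hx => ?_)
    calc ‖extendByZero G u x * ψ x‖ = ‖extendByZero G u x‖ * ‖ψ x‖ := norm_mul _ _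
      _ ≤ ‖u‖ * C := by
          apply mul_le_mul (ext_norm_le G u x) (hC x (subset_closure hx)) (norm_nonneg _)
            (norm_nonneg u)

lemma cont_functional (G : Set E2) (hG : IsOpen G) (hGb : Bornology.IsBounded G)
    (ψ : E2 → ℝ) (hψ : Continuous ψ) :
    Continuous (fun u : ↥(closure G) →ᵇ ℝ => ∫ x in G, extendByZero G u x * ψ x) := by
  have key : ∀ u v : ↥(closure G) →ᵇ ℝ,
      ‖(∫ x in G, extendByZero G u x * ψ x) - ∫ x in G, extendByZero G v x * ψ x‖
        ≤ ‖u - v‖ * ∫ x in G, ‖ψ x‖ := by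
    intro u v
    have hint : IntegrableOn (fun x => ‖ψ x‖) G :=
      (hψ.norm.continuousOn.integrableOn_compact hGb.isCompact_closure).mono_set subset_closure
    rw [← integral_sub (ext_integrableOn G hG hGb u ψ hψ) (ext_integrableOn G hG hGb v ψ hψ),
      ← integral_const_mul]
    refine norm_integral_le_of_norm_le (hint.const_mul _) (ae_of_all _ fun x => ?_)
    have h1 : extendByZero G u x - extendByZero G v x = extendByZero G (u - v) x := by
      by_cases hx : x ∈ closure G
      · rw [ext_apply G u hx, ext_apply G v hx, ext_apply G (u - v) hx]; simp
      · rw [ext_zero G u hx, ext_zero G v hx, ext_zero G (u - v) hx]; ring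
    calc ‖extendByZero G u x * ψ x - extendByZero G v x * ψ x‖
        = ‖extendByZero G (u - v) x‖ * ‖ψ x‖ := by rw [← sub_mul, h1, norm_mul]
      _ ≤ ‖u - v‖ * ‖ψ x‖ :=
          mul_le_mul_of_nonneg_right (ext_norm_le G (u - v) x) (norm_nonneg _)
  have hI : (0:ℝ) ≤ ∫ x in G, ‖ψ x‖ := integral_nonneg fun x => norm_nonneg _
  refine (LipschitzWith.of_dist_le_mul (K := (∫ x in G, ‖ψ x‖).toNNReal)
    fun u v => ?_).continuous
  rw [Real.dist_eq, Real.coe_toNNReal _ hI, dist_eq_norm]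
  calc |(∫ x in G, extendByZero G u x * ψ x) - ∫ x in G, extendByZero G v x * ψ x|
      ≤ ‖u - v‖ * ∫ x in G, ‖ψ x‖ := key u v
    _ = (∫ x in G, ‖ψ x‖) * ‖u - v‖ := mul_comm _ _

lemma lap_cont {φ : E2 → ℝ} (hφ : ContDiff ℝ (⊤ : ℕ∞) φ) : Continuous (lap φ) := by
  apply continuous_finset_sum
  intro i _
  have h1 : ContDiff ℝ (⊤ : ℕ∞) (fun y => fderiv ℝ φ y (EuclideanSpace.single i 1)) :=
    (hφ.fderiv_right (m := (⊤ : ℕ∞)) (by simp)).clm_apply contDiff_const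
  exact ((h1.fderiv_right (m := (⊤ : ℕ∞)) (by simp)).clm_apply contDiff_const).continuous

/-- The operator `P2 u = Δu` with domain `{u ∈ C2(Ḡ) : Δu ∈ C2(Ḡ)}` admits a closure
in the Banach space `C2(Ḡ)`: the closure of its graph is again the graph of a
(single-valued) operator. -/

theorem P2_admits_closure (S : Setting2) :
    ∀ p ∈ closure S.graphP, ∀ q ∈ closure S.graphP, p.1 = q.1 → p.2 = q.2 := by
  have hG := S.hG_open
  have hGb := S.hG_bdd
  -- the "distributional Laplacian" relation is a closed condition
  have hclosed : IsClosed {r : (↥(closure S.G) →ᵇ ℝ) × (↥(closure S.G) →ᵇ ℝ) |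
      IsDistLaplacianOn S.G (extendByZero S.G r.1) (extendByZero S.G r.2)} := by
    have hset : {r : (↥(closure S.G) →ᵇ ℝ) × (↥(closure S.G) →ᵇ ℝ) |
        IsDistLaplacianOn S.G (extendByZero S.G r.1) (extendByZero S.G r.2)} =
      ⋂ (φ : E2 → ℝ) (_ : ContDiff ℝ (⊤ : ℕ∞) φ) (_ : HasCompactSupport φ)
        (_ : tsupport φ ⊆ S.G),
        {r : (↥(closure S.G) →ᵇ ℝ) × (↥(closure S.G) →ᵇ ℝ) |
          ∫ x in S.G, extendByZero S.G r.1 x * lap φ x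
            = ∫ x in S.G, extendByZero S.G r.2 x * φ x} := by
      ext r
      simp only [mem_setOf_eq, mem_iInter, IsDistLaplacianOn]
    rw [hset]
    refine isClosed_iInter fun φ => isClosed_iInter fun hφ =>
      isClosed_iInter fun _ => isClosed_iInter fun _ => ?_
    exact isClosed_eq
      ((cont_functional S.G hG hGb (lap φ) (lap_cont hφ)).comp continuous_fst)
      ((cont_functional S.G hG hGb φ hφ.continuous).comp continuous_snd)
  have hsub : closure S.graphP ⊆ {r : (↥(closure S.G) →ᵇ ℝ) × (↥(closure S.G) →ᵇ ℝ) |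
      IsDistLaplacianOn S.G (extendByZero S.G r.1) (extendByZero S.G r.2)} :=
    closure_minimal (fun r hr => hr.2.2) hclosed
  intro p hp q hq hpq
  have hp' : IsDistLaplacianOn S.G (extendByZero S.G p.1) (extendByZero S.G p.2) := hsub hp
  have hq' : IsDistLaplacianOn S.G (extendByZero S.G q.1) (extendByZero S.G q.2) := hsub hq
  -- p.2 and q.2 are both distributional Laplacians of the same function, hence a.e. equal on G
  have hint : ∀ (u : ↥(closure S.G) →ᵇ ℝ) (ψ : E2 → ℝ), Continuous ψ →
      IntegrableOn (fun x => extendByZero S.G u x * ψ x) S.G :=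
    fun u ψ hψ => ext_integrableOn S.G hG hGb u ψ hψ
  have hloc : LocallyIntegrableOn
      (fun x => extendByZero S.G p.2 x - extendByZero S.G q.2 x) S.G volume := by
    refine IntegrableOn.locallyIntegrableOn ?_
    have h1 := hint p.2 (fun _ => 1) continuous_const
    have h2 := hint q.2 (fun _ => 1) continuous_const
    simp only [mul_one] at h1 h2
    exact h1.sub h2
  have hae := hG.ae_eq_zero_of_integral_contDiff_smul_eq_zero hloc ?_
  swap
  · intro g hg hgc hgs
    have e1 : ∫ x, g x • (extendByZero S.G p.2 x - extendByZero S.G q.2 x)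
        = ∫ x in S.G, g x • (extendByZero S.G p.2 x - extendByZero S.G q.2 x) := by
      refine (setIntegral_eq_integral_of_forall_compl_eq_zero fun x hx => ?_).symm
      have : g x = 0 := image_eq_zero_of_notMem_tsupport fun hmem => hx (hgs hmem)
      rw [this, zero_smul]
    have e2 : (fun x => g x • (extendByZero S.G p.2 x - extendByZero S.G q.2 x))
        = fun x => extendByZero S.G p.2 x * g x - extendByZero S.G q.2 x * g x := by
      funext x; simp only [smul_eq_mul]; ring
    rw [e1, e2, integral_sub (hint p.2 g hg.continuous) (hint q.2 g hg.continuous),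
      sub_eq_zero]
    have A := hp' g hg hgc hgs
    have B := hq' g hg hgc hgs
    have e3 : (fun x => extendByZero S.G p.2 x * g x)
        = fun x => g x * extendByZero S.G p.2 x := by funext x; ring
    have e4 : (fun x => extendByZero S.G q.2 x * g x)
        = fun x => g x * extendByZero S.G q.2 x := by funext x; ring
    calc ∫ x in S.G, extendByZero S.G p.2 x * g x
        = ∫ x in S.G, extendByZero S.G p.1 x * lap g x := A.symm
      _ = ∫ x in S.G, extendByZero S.G q.1 x * lap g x := by rw [hpq]
      _ = ∫ x in S.G, extendByZero S.G q.2 x * g x := B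
  -- from a.e. equality and continuity, equality on G
  have heq : EqOn (extendByZero S.G p.2) (extendByZero S.G q.2) S.G := by
    refine Measure.eqOn_of_ae_eq (μ := volume) ?_ ((ext_contOn S.G p.2).mono subset_closure)
      ((ext_contOn S.G q.2).mono subset_closure) ?_
    · refine (ae_restrict_iff' hG.measurableSet).2 (hae.mono fun x hx hxG => ?_)
      exact sub_eq_zero.mp (hx hxG)
    · rw [hG.interior_eq]; exact subset_closure
  -- G is dense in closure G, so equality extends to closure G
  have hdense : Dense (Subtype.val ⁻¹' S.G : Set ↥(closure S.G)) := by
    intro a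
    rw [closure_subtype]
    have : Subtype.val '' (Subtype.val ⁻¹' S.G : Set ↥(closure S.G)) = S.G := by
      rw [Subtype.image_preimage_coe]
      exact inter_eq_self_of_subset_right subset_closure
    rw [this]
    exact a.2
  have hfin : ⇑p.2 = ⇑q.2 := by
    refine Continuous.ext_on hdense p.2.continuous q.2.continuous fun a ha => ?_
    have h := heq ha
    rwa [ext_apply S.G p.2 (subset_closure ha), ext_apply S.G q.2 (subset_closure ha),
      Subtype.coe_eta] at h
  exact DFunLike.coe_injective hfin


end
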